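/- Let \omega(1)/n \le p \le 1/2 and let f : \{-1,1\}^n \to \{-1,1\} be f(x) = sign(x_1 + \cdots + x_n - n(1-2p)), the p-biased majority. Under the p-biased measure (where each coordinate is -1 with probability p), the sum of the degree-1 p-biased Fourier coefficients satisfies \sum_{i=1}^n \hat{f_p}(i) = (1/(2\sqrt{p(1-p)})) E[|\sum_i x_i - n(1-2p)|] \ge c\sqrt{n} for a universal constant c > 0. -/
import Mathlib

open Finset

namespace Stmt17

variable (p : ℝ)

noncomputable def wt (b : Bool) : ℝ := if b then 1 - p else p
noncomputable def Yb (b : Bool) : ℝ := (if b then (1:ℝ) else -1) - (1 - 2*p)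
noncomputable def W (n : ℕ) (s : Fin n → Bool) : ℝ := ∏ i, wt p (s i)
noncomputable def Ex (n : ℕ) (g : (Fin n → Bool) → ℝ) : ℝ := ∑ s, W p n s * g s
noncomputable def T (n : ℕ) (s : Fin n → Bool) : ℝ := ∑ i, Yb p (s i)

lemma Ex_congr (n : ℕ) {g h : (Fin n → Bool) → ℝ} (H : ∀ s, g s = h s) :
    Ex p n g = Ex p n h := by
  unfold Ex; exact Finset.sum_congr rfl fun s _ => by rw [H s]

lemma Ex_add (n : ℕ) (g h : (Fin n → Bool) → ℝ) :
    Ex p n (fun s => g s + h s) = Ex p n g + Ex p n h := by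
  unfold Ex; rw [← Finset.sum_add_distrib]
  exact Finset.sum_congr rfl fun s _ => by ring

lemma Ex_split (n : ℕ) (h : Bool → ℝ) (g : (Fin n → Bool) → ℝ)
    (F : (Fin (n+1) → Bool) → ℝ) (hF : ∀ b t, F (Fin.cons b t) = h b * g t) :
    Ex p (n+1) F = (∑ b, wt p b * h b) * Ex p n g := by
  unfold Ex
  rw [← Equiv.sum_comp (Fin.consEquiv (fun _ : Fin (n+1) => Bool))
      (fun s : Fin (n+1) → Bool => W p (n+1) s * F s),
    Fintype.sum_prod_type, Finset.sum_mul_sum]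
  refine Finset.sum_congr rfl fun b _ => Finset.sum_congr rfl fun t _ => ?_
  have he : (Fin.consEquiv (fun _ : Fin (n+1) => Bool)) (b, t) = Fin.cons b t := rfl
  rw [he]
  have hW : W p (n+1) (Fin.cons b t) = wt p b * W p n t := by
    unfold W
    rw [Fin.prod_univ_succ]
    simp [Fin.cons_zero, Fin.cons_succ]
  rw [hW, hF b t]; ring

lemma sum_wt_one : ∑ b, wt p b * (1:ℝ) = 1 := by
  simp [Fintype.sum_bool, wt]

lemma Ex_one (n : ℕ) : Ex p n (fun _ => (1:ℝ)) = 1 := by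
  induction n with
  | zero => simp [Ex, W]
  | succ n ih =>
      rw [Ex_split p n (fun _ => 1) (fun _ => 1) _ (fun b t => by norm_num), ih, sum_wt_one,
        mul_one]

lemma sum_wt_Y : ∑ b, wt p b * Yb p b = 0 := by
  simp [Fintype.sum_bool, wt, Yb]; ring

lemma sum_wt_Y2 : ∑ b, wt p b * (Yb p b)^2 = 4*p*(1-p) := by
  simp [Fintype.sum_bool, wt, Yb]; ring

lemma T_cons (n : ℕ) (b : Bool) (t : Fin n → Bool) :
    T p (n+1) (Fin.cons b t) = Yb p b + T p n t := by
  unfold T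
  rw [Fin.sum_univ_succ]
  simp [Fin.cons_zero, Fin.cons_succ]

lemma m1 (n : ℕ) : Ex p n (T p n) = 0 := by
  induction n with
  | zero => simp [Ex, T, W]
  | succ n ih =>
      rw [show T p (n+1) = fun s => T p (n+1) s from rfl,
        Ex_congr p (n+1) (h := fun s => (fun b => Yb p b) (s 0) * 1
            + (fun _ => (1:ℝ)) (s 0) * T p n (Fin.tail s)) ?_,
        Ex_add,
        Ex_split p n (fun b => Yb p b) (fun _ => 1) _ (fun b t => by
          simp [Fin.cons_zero, Fin.tail_cons]),
        Ex_split p n (fun _ => (1:ℝ)) (T p n) _ (fun b t => by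
          simp [Fin.cons_zero, Fin.tail_cons]),
        ih, sum_wt_Y]
      · ring
      · intro s
        have := T_cons p n (s 0) (Fin.tail s)
        rw [Fin.cons_self_tail] at this
        rw [this]; ring

lemma m2 (n : ℕ) : Ex p n (fun s => (T p n s)^2) = n * (4*p*(1-p)) := by
  induction n with
  | zero => simp [Ex, T, W]
  | succ n ih =>
      rw [Ex_congr p (n+1) (h := fun s => ((fun b => (Yb p b)^2) (s 0) * 1
            + (fun b => 2 * Yb p b) (s 0) * T p n (Fin.tail s))
            + (fun _ => (1:ℝ)) (s 0) * (fun t => (T p n t)^2) (Fin.tail s)) ?_,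
        Ex_add, Ex_add,
        Ex_split p n (fun b => (Yb p b)^2) (fun _ => 1) _ (fun b t => by
          simp [Fin.cons_zero, Fin.tail_cons]),
        Ex_split p n (fun b => 2 * Yb p b) (T p n) _ (fun b t => by
          simp [Fin.cons_zero, Fin.tail_cons]),
        Ex_split p n (fun _ => (1:ℝ)) (fun t => (T p n t)^2) _ (fun b t => by
          simp [Fin.cons_zero, Fin.tail_cons]),
        ih, m1, Ex_one, sum_wt_Y2, sum_wt_one]
      · have h1 : ∑ b, wt p b * (2 * Yb p b) = 0 := by
          simp [Fintype.sum_bool, wt, Yb]; ring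
        rw [h1]; push_cast; ring
      · intro s
        have := T_cons p n (s 0) (Fin.tail s)
        rw [Fin.cons_self_tail] at this
        rw [this]; ring

lemma m4 (n : ℕ) : Ex p n (fun s => (T p n s)^4)
    = n * (∑ b, wt p b * (Yb p b)^4) + (3 * n^2 - 3 * n) * (4*p*(1-p))^2 := by
  induction n with
  | zero => simp [Ex, T, W]
  | succ n ih =>
      rw [Ex_congr p (n+1) (h := fun s =>
            ((((fun b => (Yb p b)^4) (s 0) * 1
            + (fun b => 4 * (Yb p b)^3) (s 0) * T p n (Fin.tail s))
            + (fun b => 6 * (Yb p b)^2) (s 0) * (fun t => (T p n t)^2) (Fin.tail s))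
            + (fun b => 4 * Yb p b) (s 0) * (fun t => (T p n t)^3) (Fin.tail s))
            + (fun _ => (1:ℝ)) (s 0) * (fun t => (T p n t)^4) (Fin.tail s)) ?_,
        Ex_add, Ex_add, Ex_add, Ex_add,
        Ex_split p n (fun b => (Yb p b)^4) (fun _ => 1) _ (fun b t => by
          simp [Fin.cons_zero, Fin.tail_cons]),
        Ex_split p n (fun b => 4 * (Yb p b)^3) (T p n) _ (fun b t => by
          simp [Fin.cons_zero, Fin.tail_cons]),
        Ex_split p n (fun b => 6 * (Yb p b)^2) (fun t => (T p n t)^2) _ (fun b t => by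
          simp [Fin.cons_zero, Fin.tail_cons]),
        Ex_split p n (fun b => 4 * Yb p b) (fun t => (T p n t)^3) _ (fun b t => by
          simp [Fin.cons_zero, Fin.tail_cons]),
        Ex_split p n (fun _ => (1:ℝ)) (fun t => (T p n t)^4) _ (fun b t => by
          simp [Fin.cons_zero, Fin.tail_cons]),
        ih, m1, m2, Ex_one, sum_wt_one]
      · have h6 : ∑ b, wt p b * (6 * (Yb p b)^2) = 6 * (4*p*(1-p)) := by
          simp [Fintype.sum_bool, wt, Yb]; ring
        have h4 : ∑ b, wt p b * (4 * Yb p b) = 0 := by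
          simp [Fintype.sum_bool, wt, Yb]; ring
        rw [h6, h4]; push_cast; ring
      · intro s
        have := T_cons p n (s 0) (Fin.tail s)
        rw [Fin.cons_self_tail] at this
        rw [this]; ring


lemma W_nonneg (hp0 : 0 ≤ p) (hp1 : p ≤ 1) (n : ℕ) (s : Fin n → Bool) : 0 ≤ W p n s := by
  refine Finset.prod_nonneg fun i _ => ?_
  unfold wt
  split <;> linarith

lemma abs_pow4 (a : ℝ) : |a|^4 = a^4 := by
  rw [show (4:ℕ) = 2*2 from rfl, pow_mul, sq_abs, ← pow_mul]

lemma abs_pow6 (a : ℝ) : |a|^6 = a^6 := by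
  rw [show (6:ℕ) = 2*3 from rfl, pow_mul, sq_abs, ← pow_mul]

lemma combine (V E1 E3 M2 M4 : ℝ) (hV : 4 ≤ V) (hE1nn : 0 ≤ E1) (hE3nn : 0 ≤ E3)
    (cs1 : M2^2 ≤ E1 * E3) (cs2 : E3^2 ≤ M2 * M4) (hM2 : M2 = V) (hM4 : M4 ≤ 4 * V^2) :
    Real.sqrt V / 2 ≤ E1 := by
  have hVpos : (0:ℝ) < V := by linarith
  have hsvpos : 0 < Real.sqrt V := Real.sqrt_pos.2 hVpos
  set sv : ℝ := Real.sqrt V with hsvdef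
  have hsv2 : sv^2 = V := Real.sq_sqrt hVpos.le
  have hE3ub : E3 ≤ 2 * sv^3 := by
    have h1 : E3^2 ≤ (2*sv^3)^2 := by
      have he : (2*sv^3)^2 = 4 * V^2 * V := by rw [← hsv2]; ring
      rw [he]
      calc E3^2 ≤ M2 * M4 := cs2
        _ ≤ V * (4*V^2) := by
            rw [hM2]; exact mul_le_mul_of_nonneg_left hM4 hVpos.le
        _ = 4 * V^2 * V := by ring
    have h2 := Real.sqrt_le_sqrt h1
    rwa [Real.sqrt_sq hE3nn, Real.sqrt_sq (by positivity)] at h2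
  have hfin : sv ≤ 2 * E1 := by
    have h1 : sv^4 ≤ E1 * (2*sv^3) := by
      calc sv^4 = V^2 := by rw [← hsv2]; ring
        _ ≤ E1 * E3 := by rw [← hM2]; exact cs1
        _ ≤ E1 * (2*sv^3) := mul_le_mul_of_nonneg_left hE3ub hE1nn
    nlinarith [pow_pos hsvpos 3, hsvpos]
  linarith

lemma abs_T_lb (hp0 : 0 ≤ p) (hp1 : p ≤ 1) (n : ℕ)
    (hV : 4 ≤ (n:ℝ) * (4*p*(1-p))) :
    Real.sqrt ((n:ℝ) * (4*p*(1-p))) / 2 ≤ Ex p n (fun s => |T p n s|) := by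
  have hW : ∀ s : Fin n → Bool, 0 ≤ W p n s := W_nonneg p hp0 hp1 n
  refine combine _ _ (Ex p n (fun s => |T p n s|^3)) (Ex p n (fun s => (T p n s)^2))
    (Ex p n (fun s => (T p n s)^4)) hV ?_ ?_ ?_ ?_ ?_ ?_
  · unfold Ex
    exact Finset.sum_nonneg fun s _ => mul_nonneg (hW s) (abs_nonneg _)
  · unfold Ex
    exact Finset.sum_nonneg fun s _ => mul_nonneg (hW s) (by positivity)
  · -- Cauchy-Schwarz 1
    have h := Finset.sum_mul_sq_le_sq_mul_sq Finset.univ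
      (fun s : Fin n → Bool => Real.sqrt (W p n s * |T p n s|))
      (fun s : Fin n → Bool => Real.sqrt (W p n s * |T p n s|^3))
    have e0 : ∑ s : Fin n → Bool,
        Real.sqrt (W p n s * |T p n s|) * Real.sqrt (W p n s * |T p n s|^3)
          = Ex p n (fun s => (T p n s)^2) := by
      unfold Ex
      refine Finset.sum_congr rfl fun s _ => ?_
      rw [← Real.sqrt_mul (mul_nonneg (hW s) (abs_nonneg _))]
      have hid : W p n s * |T p n s| * (W p n s * |T p n s|^3)
          = (W p n s * (T p n s)^2)^2 := by
        linear_combination (W p n s)^2 * abs_pow4 (T p n s)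
      rw [hid, Real.sqrt_sq (mul_nonneg (hW s) (sq_nonneg _))]
    have ef : ∑ s : Fin n → Bool, Real.sqrt (W p n s * |T p n s|) ^ 2
        = Ex p n (fun s => |T p n s|) := by
      unfold Ex
      exact Finset.sum_congr rfl fun s _ =>
        Real.sq_sqrt (mul_nonneg (hW s) (abs_nonneg _))
    have eg : ∑ s : Fin n → Bool, Real.sqrt (W p n s * |T p n s|^3) ^ 2
        = Ex p n (fun s => |T p n s|^3) := by
      unfold Ex
      exact Finset.sum_congr rfl fun s _ =>
        Real.sq_sqrt (mul_nonneg (hW s) (by positivity))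
    rw [e0, ef, eg] at h
    exact h
  · -- Cauchy-Schwarz 2
    have h := Finset.sum_mul_sq_le_sq_mul_sq Finset.univ
      (fun s : Fin n → Bool => Real.sqrt (W p n s * (T p n s)^2))
      (fun s : Fin n → Bool => Real.sqrt (W p n s * (T p n s)^4))
    have e0 : ∑ s : Fin n → Bool,
        Real.sqrt (W p n s * (T p n s)^2) * Real.sqrt (W p n s * (T p n s)^4)
          = Ex p n (fun s => |T p n s|^3) := by
      unfold Ex
      refine Finset.sum_congr rfl fun s _ => ?_
      rw [← Real.sqrt_mul (mul_nonneg (hW s) (sq_nonneg _))]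
      have hid : W p n s * (T p n s)^2 * (W p n s * (T p n s)^4)
          = (W p n s * |T p n s|^3)^2 := by
        linear_combination (-(W p n s)^2) * abs_pow6 (T p n s)
      rw [hid, Real.sqrt_sq (mul_nonneg (hW s) (by positivity))]
    have ef : ∑ s : Fin n → Bool, Real.sqrt (W p n s * (T p n s)^2) ^ 2
        = Ex p n (fun s => (T p n s)^2) := by
      unfold Ex
      exact Finset.sum_congr rfl fun s _ =>
        Real.sq_sqrt (mul_nonneg (hW s) (sq_nonneg _))
    have eg : ∑ s : Fin n → Bool, Real.sqrt (W p n s * (T p n s)^4) ^ 2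
        = Ex p n (fun s => (T p n s)^4) := by
      unfold Ex
      exact Finset.sum_congr rfl fun s _ =>
        Real.sq_sqrt (mul_nonneg (hW s) (by positivity))
    rw [e0, ef, eg] at h
    exact h
  · exact m2 p n
  · -- fourth moment bound
    rw [m4]
    have hκ : ∑ b, wt p b * (Yb p b)^4 ≤ 4*(4*p*(1-p)) := by
      simp only [Fintype.sum_bool, wt, Yb]
      norm_num
      nlinarith [sq_nonneg (p*(1-p)), mul_nonneg hp0 (sub_nonneg.2 hp1)]
    have hκnn : 0 ≤ ∑ b, wt p b * (Yb p b)^4 := by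
      refine Finset.sum_nonneg fun b _ => mul_nonneg ?_ (by positivity)
      unfold wt; split <;> linarith
    have hσnn : 0 ≤ 4*p*(1-p) := by nlinarith
    have hn1 : (1:ℝ) ≤ (n:ℝ) := by nlinarith
    have h1 : (n:ℝ) * (∑ b, wt p b * (Yb p b)^4) ≤ (n:ℝ) * (4*(4*p*(1-p))) := by
      apply mul_le_mul_of_nonneg_left hκ (by positivity)
    nlinarith [hV, sq_nonneg ((n:ℝ)*(4*p*(1-p))), Nat.cast_nonneg (α := ℝ) n,
      mul_nonneg hσnn hσnn]

end Stmt17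

theorem stmt17 :
    ∃ c : ℝ, 0 < c ∧ ∃ A : ℝ, 0 < A ∧ ∀ (n : ℕ) (p : ℝ), A / n ≤ p → p ≤ 1 / 2 →
      let w : (Fin n → Bool) → ℝ := fun s => ∏ i, (if s i then 1 - p else p)
      let S : (Fin n → Bool) → ℝ := fun s => ∑ i, (if s i then (1:ℝ) else -1)
      let f : (Fin n → Bool) → ℝ := fun s => if 0 ≤ S s - n * (1 - 2 * p) then 1 else -1
      let coef : Fin n → ℝ := fun i => ∑ s, w s *
        (f s * (((if s i then (1:ℝ) else -1) - (1 - 2 * p)) / (2 * Real.sqrt (p * (1 - p)))))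
      (∑ i, coef i)
          = (1 / (2 * Real.sqrt (p * (1 - p)))) * ∑ s, w s * |S s - n * (1 - 2 * p)| ∧
        c * Real.sqrt n ≤ ∑ i, coef i := by
  refine ⟨1/2, by norm_num, 2, by norm_num, ?_⟩
  intro n p hA hp2
  intro w S f coef
  have hT : ∀ s : Fin n → Bool, Stmt17.T p n s = S s - n*(1-2*p) := by
    intro s
    show (∑ i, Stmt17.Yb p (s i)) = _
    simp only [Stmt17.Yb, S]
    rw [Finset.sum_sub_distrib, Finset.sum_const, Finset.card_univ, Fintype.card_fin,
      nsmul_eq_mul]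
  have hfT : ∀ s, f s * (S s - n*(1-2*p)) = |S s - n*(1-2*p)| := by
    intro s
    by_cases h : 0 ≤ S s - (n:ℝ)*(1-2*p)
    · simp only [f]
      rw [if_pos h, one_mul, abs_of_nonneg h]
    · simp only [f]
      rw [if_neg h, abs_of_neg (lt_of_not_ge h)]
      ring
  have key : ∑ i, coef i
      = (1/(2*Real.sqrt (p*(1-p)))) * ∑ s, w s * |S s - n*(1-2*p)| := by
    simp only [coef]
    rw [Finset.sum_comm, Finset.mul_sum]
    refine Finset.sum_congr rfl fun s _ => ?_
    have hsum : ∑ i : Fin n, (((if s i then (1:ℝ) else -1)) - (1 - 2*p))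
        = S s - n*(1-2*p) := by
      simp only [S]
      rw [Finset.sum_sub_distrib, Finset.sum_const, Finset.card_univ, Fintype.card_fin,
        nsmul_eq_mul]
    calc ∑ i, w s * (f s * (((if s i then (1:ℝ) else -1) - (1-2*p))
            / (2*Real.sqrt (p*(1-p)))))
        = (w s * f s * (1/(2*Real.sqrt (p*(1-p)))))
            * ∑ i : Fin n, (((if s i then (1:ℝ) else -1)) - (1 - 2*p)) := by
          rw [Finset.mul_sum]; exact Finset.sum_congr rfl fun i _ => by ring
      _ = (1/(2*Real.sqrt (p*(1-p)))) * (w s * (f s * (S s - n*(1-2*p)))) := by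
          rw [hsum]; ring
      _ = (1/(2*Real.sqrt (p*(1-p)))) * (w s * |S s - n*(1-2*p)|) := by rw [hfT s]
  refine ⟨key, ?_⟩
  rcases Nat.eq_zero_or_pos n with hn | hn
  · subst hn
    simp
  · have hn' : (1:ℝ) ≤ (n:ℝ) := by exact_mod_cast hn
    have hnpos : (0:ℝ) < (n:ℝ) := by linarith
    have hp0 : 0 < p := lt_of_lt_of_le (by positivity : (0:ℝ) < 2/(n:ℝ)) hA
    have hq : (1:ℝ)/2 ≤ 1 - p := by linarith
    have hnp : 2 ≤ (n:ℝ)*p := by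
      have h2 := (div_le_iff₀ hnpos).1 hA
      linarith
    have hV : 4 ≤ (n:ℝ)*(4*p*(1-p)) := by nlinarith
    have hlb := Stmt17.abs_T_lb p hp0.le (by linarith) n hV
    have hEx : ∑ s, w s * |S s - n*(1-2*p)|
        = Stmt17.Ex p n (fun s => |Stmt17.T p n s|) := by
      show _ = ∑ s, Stmt17.W p n s * |Stmt17.T p n s|
      refine Finset.sum_congr rfl fun s _ => ?_
      rw [hT s]
      rfl
    rw [key, hEx]
    have hpq : (0:ℝ) < p * (1-p) := by nlinarith
    have hDpos : 0 < Real.sqrt (p*(1-p)) := Real.sqrt_pos.2 hpq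
    have hVs : Real.sqrt ((n:ℝ)*(4*p*(1-p)))
        = Real.sqrt n * (2 * Real.sqrt (p*(1-p))) := by
      rw [show (n:ℝ)*(4*p*(1-p)) = (n:ℝ) * (2^2 * (p*(1-p))) by ring,
        Real.sqrt_mul (by positivity), Real.sqrt_mul (by norm_num : (0:ℝ) ≤ 2^2),
        Real.sqrt_sq (by norm_num : (0:ℝ) ≤ 2)]
    calc (1/2) * Real.sqrt n
        = (1/(2*Real.sqrt (p*(1-p)))) * (Real.sqrt ((n:ℝ)*(4*p*(1-p))) / 2) := by
          rw [hVs]; field_simp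
      _ ≤ (1/(2*Real.sqrt (p*(1-p)))) * Stmt17.Ex p n (fun s => |Stmt17.T p n s|) :=
          mul_le_mul_of_nonneg_left hlb (by positivity)
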